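/- Let K be a positive integer, let T, Γ, R be types, let v : (Fin K → Fin 4) → T, let τ : T × T → Γ, let g : Γ → R, and set f = g ∘ τ. Assume the rectangle property: for all x, x', y, y' ∈ T, if τ(x,y) = τ(x',y') then τ(x,y') = τ(x,y). Assume further that for all b₁, b₂, b₃, b₄ : Fin K → Fin 4 for which there exists an index i ∈ Fin K with b₁(i), b₂(i), b₃(i), b₄(i) pairwise distinct, we have f(v(b₁), v(b₂)) ≠ f(v(b₃), v(b₄)). Then the number of distinct values of the map b ↦ τ(v(b), v(b)), as b ranges over all of (Fin K → Fin 4), is at least 4^K / 3^K; that is, 3^K times the cardinality of the image of this map is at least 4^K. -/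
import Mathlib


/-- The `4`-tuple rectangle argument: if a protocol-induced function `f = g ∘ τ` (where `τ`
satisfies the rectangle property) distinguishes every `4`-tuple of strings that are pairwise
different on some index, then the number of distinct diagonal transcripts `τ (v b, v b)` is at
least `4^K / 3^K`. -/
theorem four_tuple_rectangle_argument
    (K : ℕ) (hK : 0 < K) {T Γ R : Type*} [DecidableEq Γ]
    (v : (Fin K → Fin 4) → T) (τ : T × T → Γ) (g : Γ → R)
    (f : T × T → R) (hf : f = g ∘ τ)
    (hrect : ∀ x x' y y' : T, τ (x, y) = τ (x', y') → τ (x, y') = τ (x, y))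
    (hdiff : ∀ b₁ b₂ b₃ b₄ : Fin K → Fin 4,
      (∃ i : Fin K, b₁ i ≠ b₂ i ∧ b₁ i ≠ b₃ i ∧ b₁ i ≠ b₄ i ∧
        b₂ i ≠ b₃ i ∧ b₂ i ≠ b₄ i ∧ b₃ i ≠ b₄ i) →
      f (v b₁, v b₂) ≠ f (v b₃, v b₄)) :
    4 ^ K ≤ 3 ^ K *
      (Finset.image (fun b : Fin K → Fin 4 => τ (v b, v b)) Finset.univ).card := by
  subst hf
  set F : (Fin K → Fin 4) → Γ := fun b => τ (v b, v b) with hF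
  -- each fiber has card ≤ 3^K
  have key : ∀ c : Γ,
      (Finset.univ.filter (fun b => F b = c)).card ≤ 3 ^ K := by
    intro c
    set S := Finset.univ.filter (fun b => F b = c) with hS
    -- cross transcripts within a fiber are constant
    have hcross : ∀ b b' : Fin K → Fin 4, b ∈ S → b' ∈ S →
        τ (v b, v b') = c := by
      intro b b' hb hb'
      have h1 : F b = c := (Finset.mem_filter.mp hb).2
      have h2 : F b' = c := (Finset.mem_filter.mp hb').2
      have := hrect (v b) (v b') (v b) (v b') (h1.trans h2.symm)
      rw [this]
      exact h1
    have hproj : ∀ i : Fin K, (S.image (fun b => b i)).card ≤ 3 := by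
      intro i
      by_contra hlt
      push_neg at hlt
      have h4 : 4 ≤ (S.image (fun b => b i)).card := hlt
      have heq : S.image (fun b => b i) = Finset.univ := by
        have hle := Finset.card_le_univ (S.image (fun b => b i))
        rw [Fintype.card_fin] at hle
        exact Finset.eq_univ_of_card _ (le_antisymm hle h4)
      have hmem : ∀ j : Fin 4, ∃ b ∈ S, b i = j := by
        intro j
        have : j ∈ S.image (fun b => b i) := by rw [heq]; exact Finset.mem_univ j
        obtain ⟨b, hb, hbi⟩ := Finset.mem_image.mp this
        exact ⟨b, hb, hbi⟩
      obtain ⟨b₁, hb₁, e₁⟩ := hmem 0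
      obtain ⟨b₂, hb₂, e₂⟩ := hmem 1
      obtain ⟨b₃, hb₃, e₃⟩ := hmem 2
      obtain ⟨b₄, hb₄, e₄⟩ := hmem 3
      apply hdiff b₁ b₂ b₃ b₄ ⟨i, by rw [e₁, e₂, e₃, e₄]; refine ⟨?_, ?_, ?_, ?_, ?_, ?_⟩ <;> decide⟩
      show g (τ (v b₁, v b₂)) = g (τ (v b₃, v b₄))
      rw [hcross b₁ b₂ hb₁ hb₂, hcross b₃ b₄ hb₃ hb₄]
    calc S.card ≤ (Fintype.piFinset (fun i => S.image (fun b => b i))).card := by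
          apply Finset.card_le_card
          intro b hb
          simp only [Fintype.mem_piFinset]
          intro i
          exact Finset.mem_image_of_mem _ hb
      _ = ∏ i, (S.image (fun b => b i)).card := Fintype.card_piFinset _
      _ ≤ ∏ _i : Fin K, 3 := Finset.prod_le_prod' (fun i _ => hproj i)
      _ = 3 ^ K := by simp
  have hsum : (Finset.univ : Finset (Fin K → Fin 4)).card =
      ∑ c ∈ Finset.image F Finset.univ,
        (Finset.univ.filter (fun b => F b = c)).card :=
    Finset.card_eq_sum_card_fiberwise (fun b _ => Finset.mem_image_of_mem F (Finset.mem_univ b))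
  have hcard : (Finset.univ : Finset (Fin K → Fin 4)).card = 4 ^ K := by
    simp [Finset.card_univ]
  calc 4 ^ K = ∑ c ∈ Finset.image F Finset.univ,
        (Finset.univ.filter (fun b => F b = c)).card := by rw [← hcard, hsum]
    _ ≤ ∑ _c ∈ Finset.image F Finset.univ, 3 ^ K :=
        Finset.sum_le_sum (fun c _ => key c)
    _ = 3 ^ K * (Finset.image F Finset.univ).card := by
        rw [Finset.sum_const, smul_eq_mul, mul_comm]
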